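/- Let u₀ be a nonvanishing solution of Δ(p(n-1)Δu(n-1)) + q(n)u(n) = λ₀ r(n)u(n) for some fixed λ₀ ∈ ℂ, with p nonvanishing. Then for every λ ∈ ℂ, the sequence u₁(n) = u₀(n) Σ_{k=0}^{n-n₀-1} (λ-λ₀)^k X^{(2k)}(n) (for n > n₀), with X^{(2k)} defined recursively from u₀, p, r at base point n₀, solves Δ(p(n-1)Δu(n-1)) + q(n)u(n) = λ r(n)u(n). -/

import Mathlib

/-- The indefinite sum of `f` vanishing at `n₀`. -/
noncomputable def istar (n₀ : ℤ) (f : ℤ → ℂ) (n : ℤ) : ℂ :=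
  if n₀ ≤ n then ∑ j ∈ Finset.Ico n₀ n, f j else -∑ j ∈ Finset.Ico n n₀, f j

/-- The sequences `X⁽ⁱ⁾`: `X⁽⁰⁾ = 1`, even steps sum `X⁽ⁱ⁻¹⁾(s)/(p(s)u₀(s)u₀(s+1))`,
odd steps sum `u₀(s+1)² X⁽ⁱ⁻¹⁾(s+1) r(s+1)`. -/
noncomputable def Xseq (u₀ p r : ℤ → ℂ) (n₀ : ℤ) : ℕ → ℤ → ℂ
  | 0 => fun _ => 1
  | i + 1 =>
      if (i + 1) % 2 = 0 then
        istar n₀ (fun s => Xseq u₀ p r n₀ i s / (p s * u₀ s * u₀ (s + 1)))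
      else
        istar n₀ (fun s => u₀ (s + 1) ^ 2 * Xseq u₀ p r n₀ i (s + 1) * r (s + 1))

/-- The sequences `Y⁽ⁱ⁾`: `Y⁽⁰⁾ = 1`, with the parity roles exchanged. -/
noncomputable def Yseq (u₀ p r : ℤ → ℂ) (n₀ : ℤ) : ℕ → ℤ → ℂ
  | 0 => fun _ => 1
  | i + 1 =>
      if (i + 1) % 2 = 0 then
        istar n₀ (fun s => u₀ (s + 1) ^ 2 * Yseq u₀ p r n₀ i (s + 1) * r (s + 1))
      else
        istar n₀ (fun s => Yseq u₀ p r n₀ i s / (p s * u₀ s * u₀ (s + 1)))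

lemma Ico_top (a b : ℤ) (h : a ≤ b) : Finset.Ico a (b+1) = insert b (Finset.Ico a b) := by
  ext x; simp [Finset.mem_Ico]; omega

lemma Ico_bot (a b : ℤ) (h : a < b) : Finset.Ico a b = insert a (Finset.Ico (a+1) b) := by
  ext x; simp [Finset.mem_Ico]; omega

lemma istar_self (n₀ : ℤ) (f : ℤ → ℂ) : istar n₀ f n₀ = 0 := by simp [istar]

lemma istar_succ (n₀ : ℤ) (f : ℤ → ℂ) (n : ℤ) : istar n₀ f (n+1) = istar n₀ f n + f n := by
  unfold istar
  rcases le_or_gt n₀ n with h | h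
  · rw [if_pos (by omega), if_pos h, Ico_top _ _ h, Finset.sum_insert (by simp)]
    ring
  · rw [if_neg (show ¬ n₀ ≤ n by omega), Ico_bot _ _ h, Finset.sum_insert (by simp)]
    rcases eq_or_lt_of_le (by omega : n + 1 ≤ n₀) with h2 | h2
    · rw [if_pos (show n₀ ≤ n + 1 by omega), ← h2]
      simp
    · rw [if_neg (show ¬ n₀ ≤ n + 1 by omega)]
      ring

lemma istar_zero (n₀ : ℤ) (f : ℤ → ℂ) (n : ℤ)
    (h : ∀ s, (n₀ ≤ s ∧ s < n) ∨ (n ≤ s ∧ s < n₀) → f s = 0) : istar n₀ f n = 0 := by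
  unfold istar
  split
  · exact Finset.sum_eq_zero fun s hs => h s (Or.inl (Finset.mem_Ico.mp hs))
  · rw [Finset.sum_eq_zero fun s hs => h s (Or.inr (Finset.mem_Ico.mp hs))]; simp

variable (u₀ p r : ℤ → ℂ) (n₀ : ℤ)

lemma Xodd (k : ℕ) : Xseq u₀ p r n₀ (2*k+1)
    = istar n₀ (fun s => u₀ (s+1)^2 * Xseq u₀ p r n₀ (2*k) (s+1) * r (s+1)) := by
  rw [Xseq, if_neg (by omega)]

lemma Xeven (k : ℕ) : Xseq u₀ p r n₀ (2*k+2)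
    = istar n₀ (fun s => Xseq u₀ p r n₀ (2*k+1) s / (p s * u₀ s * u₀ (s+1))) := by
  rw [show 2*k+2 = (2*k+1)+1 from rfl, Xseq, if_pos (by omega)]

lemma Xvan (k : ℕ) :
    (∀ n, n₀ - k ≤ n → n ≤ n₀ + k → Xseq u₀ p r n₀ (2*k+1) n = 0) ∧
    (∀ n, n₀ - k ≤ n → n ≤ n₀ + k + 1 → Xseq u₀ p r n₀ (2*k+2) n = 0) := by
  induction k with
  | zero =>
    constructor
    · intro n h1 h2
      rw [Xodd]
      exact istar_zero _ _ _ (fun s hs => by omega)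
    · intro n h1 h2
      rw [Xeven]
      refine istar_zero _ _ _ (fun s hs => ?_)
      have : Xseq u₀ p r n₀ (2*0+1) s = 0 := by
        rw [Xodd]
        exact istar_zero _ _ _ (fun t ht => by omega)
      simp [this]
  | succ k ih =>
    have hodd : ∀ n, n₀ - (k+1 : ℕ) ≤ n → n ≤ n₀ + (k+1 : ℕ) →
        Xseq u₀ p r n₀ (2*(k+1)+1) n = 0 := by
      intro n h1 h2
      push_cast at h1 h2
      rw [show 2*(k+1)+1 = 2*k+2+1 from by ring, Xseq, if_neg (by omega)]
      refine istar_zero _ _ _ (fun s hs => ?_)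
      have : Xseq u₀ p r n₀ (2*k+2) (s+1) = 0 := ih.2 (s+1) (by push_cast; omega) (by push_cast; omega)
      simp [this]
    refine ⟨hodd, ?_⟩
    intro n h1 h2
    push_cast at h1 h2
    rw [show 2*(k+1)+2 = 2*(k+1)+1+1 from rfl, Xseq, if_pos (by omega)]
    refine istar_zero _ _ _ (fun s hs => ?_)
    have : Xseq u₀ p r n₀ (2*(k+1)+1) s = 0 := hodd s (by push_cast; omega) (by push_cast; omega)
    simp [this]

lemma Xvan2 (k : ℕ) (n : ℤ) (hk : 1 ≤ k) (h1 : n₀ - k + 1 ≤ n) (h2 : n ≤ n₀ + k) :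
    Xseq u₀ p r n₀ (2*k) n = 0 := by
  obtain ⟨j, rfl⟩ : ∃ j, k = j + 1 := ⟨k - 1, by omega⟩
  have := (Xvan u₀ p r n₀ j).2 n (by push_cast at h1 ⊢; omega) (by push_cast at h2 ⊢; omega)
  rw [show 2*(j+1) = 2*j+2 from by ring]
  exact this

noncomputable def Wsum (u₀ p r : ℤ → ℂ) (n₀ : ℤ) (μ : ℂ) (M : ℕ) (m : ℤ) : ℂ :=
  ∑ k ∈ Finset.range M, μ ^ k * Xseq u₀ p r n₀ (2 * k) m

lemma trunc (lam lam₀ : ℂ) (m : ℤ) (M : ℕ)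
    (hM : (if n₀ < m then (m - n₀).toNat else (n₀ - m).toNat + 1) ≤ M) :
    ∑ k ∈ Finset.range (if n₀ < m then (m - n₀).toNat else (n₀ - m).toNat + 1),
      (lam - lam₀) ^ k * Xseq u₀ p r n₀ (2 * k) m
    = Wsum u₀ p r n₀ (lam - lam₀) M m := by
  rw [Wsum]
  apply Finset.sum_subset (Finset.range_subset_range.2 hM)
  intro k _ hk
  simp only [Finset.mem_range, not_lt] at hk
  have hz : Xseq u₀ p r n₀ (2*k) m = 0 := by
    split at hk
    · exact Xvan2 u₀ p r n₀ k m (by omega) (by omega) (by omega)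
    · exact Xvan2 u₀ p r n₀ k m (by omega) (by omega) (by omega)
  simp [hz]

lemma even_diff (hp : ∀ n, p n ≠ 0) (hu₀ : ∀ n, u₀ n ≠ 0) (k : ℕ) (m : ℤ) :
    p m * u₀ m * u₀ (m+1) * (Xseq u₀ p r n₀ (2*k+2) (m+1) - Xseq u₀ p r n₀ (2*k+2) m)
      = Xseq u₀ p r n₀ (2*k+1) m := by
  rw [Xeven, istar_succ, add_sub_cancel_left]
  have hc : p m * u₀ m * u₀ (m+1) ≠ 0 := mul_ne_zero (mul_ne_zero (hp m) (hu₀ m)) (hu₀ (m+1))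
  field_simp
  exact mul_div_cancel_left₀ _ hc

lemma odd_diff (k : ℕ) (m : ℤ) :
    Xseq u₀ p r n₀ (2*k+1) (m+1) - Xseq u₀ p r n₀ (2*k+1) m
      = u₀ (m+1) ^ 2 * Xseq u₀ p r n₀ (2*k) (m+1) * r (m+1) := by
  rw [Xodd, istar_succ]; ring

lemma core (hp : ∀ n, p n ≠ 0) (hu₀ : ∀ n, u₀ n ≠ 0) (μ : ℂ) (n : ℤ) (M : ℕ) :
    p n * u₀ n * u₀ (n+1) * (Wsum u₀ p r n₀ μ (M+1) (n+1) - Wsum u₀ p r n₀ μ (M+1) n)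
    - p (n-1) * u₀ (n-1) * u₀ n * (Wsum u₀ p r n₀ μ (M+1) n - Wsum u₀ p r n₀ μ (M+1) (n-1))
    = μ * r n * u₀ n ^ 2 * Wsum u₀ p r n₀ μ M n := by
  have hA : ∀ m : ℤ, p m * u₀ m * u₀ (m+1) *
      (Wsum u₀ p r n₀ μ (M+1) (m+1) - Wsum u₀ p r n₀ μ (M+1) m)
      = ∑ j ∈ Finset.range M, μ ^ (j+1) * Xseq u₀ p r n₀ (2*j+1) m := by
    intro m
    rw [Wsum, Wsum, ← Finset.sum_sub_distrib, Finset.mul_sum, Finset.sum_range_succ']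
    have h0 : μ ^ 0 * Xseq u₀ p r n₀ (2*0) (m+1) - μ ^ 0 * Xseq u₀ p r n₀ (2*0) m = 0 := by
      simp [Xseq]
    rw [show (2 : ℕ) * 0 = 0 from rfl] at h0
    rw [h0, mul_zero, add_zero]
    refine Finset.sum_congr rfl fun j _ => ?_
    have := even_diff u₀ p r n₀ hp hu₀ j m
    rw [show 2*(j+1) = 2*j+2 from by ring]
    rw [← this]; ring
  have hB := hA (n-1)
  rw [show n - 1 + 1 = n from by ring] at hB
  rw [hA n, hB, ← Finset.sum_sub_distrib, Wsum, Finset.mul_sum]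
  refine Finset.sum_congr rfl fun j _ => ?_
  have := odd_diff u₀ p r n₀ j (n-1)
  rw [show n - 1 + 1 = n from by ring] at this
  linear_combination μ ^ (j+1) * this

/-- Remark 3 -/
theorem shifted_spectral_solution (u₀ p q r u₁ : ℤ → ℂ) (n₀ : ℤ) (lam lam₀ : ℂ)
    (hp : ∀ n, p n ≠ 0) (hu₀ : ∀ n, u₀ n ≠ 0)
    (hsol : ∀ n : ℤ,
      p n * (u₀ (n + 1) - u₀ n) - p (n - 1) * (u₀ n - u₀ (n - 1)) + q n * u₀ n
        = lam₀ * r n * u₀ n)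
    (hu₁ : ∀ n : ℤ, u₁ n = u₀ n *
        ∑ k ∈ Finset.range (if n₀ < n then (n - n₀).toNat else (n₀ - n).toNat + 1),
          (lam - lam₀) ^ k * Xseq u₀ p r n₀ (2 * k) n) :
    ∀ n : ℤ,
      p n * (u₁ (n + 1) - u₁ n) - p (n - 1) * (u₁ n - u₁ (n - 1)) + q n * u₁ n
        = lam * r n * u₁ n := by
  intro n
  set M : ℕ := (if n₀ < n then (n - n₀).toNat else (n₀ - n).toNat + 1) with hMdef
  have key : ∀ m : ℤ, (if n₀ < m then (m - n₀).toNat else (n₀ - m).toNat + 1) ≤ M + 1 →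
      u₁ m = u₀ m * Wsum u₀ p r n₀ (lam - lam₀) (M+1) m := fun m hm => by
    rw [hu₁ m, trunc u₀ p r n₀ lam lam₀ m (M+1) hm]
  have ep := key (n+1) (by rw [hMdef]; split_ifs <;> omega)
  have e0 := key n (by rw [hMdef]; split_ifs <;> omega)
  have em := key (n-1) (by rw [hMdef]; split_ifs <;> omega)
  have hzero : Xseq u₀ p r n₀ (2*M) n = 0 := by
    apply Xvan2 u₀ p r n₀ M n
    all_goals (rw [hMdef]; split_ifs <;> omega)
  have hWn : Wsum u₀ p r n₀ (lam - lam₀) (M+1) n = Wsum u₀ p r n₀ (lam - lam₀) M n := by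
    simp only [Wsum]
    rw [Finset.sum_range_succ, hzero, mul_zero, add_zero]
  have hcore := core u₀ p r n₀ hp hu₀ (lam - lam₀) n M
  rw [ep, e0, em]
  apply mul_left_cancel₀ (hu₀ n)
  linear_combination (u₀ n * Wsum u₀ p r n₀ (lam - lam₀) (M+1) n) * hsol n + hcore
    - (lam - lam₀) * r n * u₀ n ^ 2 * hWn
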